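/- Let C : ℕ → ℕ → ℤ₂ be any infinite upper triangular matrix with C i i = 9^i and C i (i+1) = 1 for all i ≥ 0 (and C i j = 0 for j < i, with the entries C i j for j ≥ i+2 arbitrary). Then there exists an infinite upper triangular matrix U : ℕ → ℕ → ℤ₂ with every diagonal entry U i i a 2-adic unit such that U·B = C·U, i.e. for all i ≤ j, ∑_{k ∈ Finset.Icc i j} (U i k)·(B k j) = ∑_{k ∈ Finset.Icc i j} (C i k)·(U k j). (Equivalently, U is invertible in the ring of infinite upper triangular matrices over ℤ₂ and U⁻¹·C·U = B.) -/

import Mathlib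

/-- B : the infinite upper triangular matrix with B i i = 9^i, B i (i+1) = 1,
and all other entries 0. -/
noncomputable def Bmat : ℕ → ℕ → ℤ_[2] := fun i j =>
  if j = i then 9 ^ i else if j = i + 1 then 1 else 0

namespace ConjAux

lemma isUnit_iff_toZMod (x : ℤ_[2]) : IsUnit x ↔ PadicInt.toZMod x ≠ 0 := by
  rw [← IsLocalRing.notMem_maximalIdeal, ← PadicInt.ker_toZMod, RingHom.mem_ker]

lemma toZMod_nine_pow (a : ℕ) : PadicInt.toZMod ((9 : ℤ_[2]) ^ a) = 1 := by
  rw [map_pow]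
  have h9 : ((9 : ℤ_[2])) = ((9 : ℕ) : ℤ_[2]) := by norm_num
  rw [h9, map_natCast]
  have : ((9 : ℕ) : ZMod 2) = 1 := by decide
  rw [this, one_pow]

lemma solve_col (C : ℕ → ℕ → ℤ_[2])
    (hC_tri : ∀ i j, j < i → C i j = 0)
    (hC_diag : ∀ i, C i i = 9 ^ i)
    (hC_super : ∀ i, C i (i + 1) = 1)
    (j : ℕ) (hj : 1 ≤ j) (t : ℕ → ℤ_[2]) (htu : IsUnit (t (j - 1))) :
    ∃ w : ℕ → ℤ_[2], (∀ i, j < i → w i = 0) ∧ IsUnit (w j) ∧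
      ∀ i < j, ∑ k ∈ Finset.Icc i j, C i k * w k = 9 ^ j * w i + t i := by
  classical
  set M : Matrix (Fin j) (Fin j) ℤ_[2] :=
    fun i k => C i ((k : ℕ) + 1) - if (k : ℕ) + 1 = (i : ℕ) then 9 ^ j else 0 with hM
  have hdet : IsUnit M.det := by
    rw [isUnit_iff_toZMod]
    have hmap : (PadicInt.toZMod.mapMatrix M).det = 1 := by
      have htri : (PadicInt.toZMod.mapMatrix M).BlockTriangular id := by
        intro i k hki
        have hk : (k : ℕ) + 1 ≤ (i : ℕ) := hki
        show PadicInt.toZMod (M i k) = 0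
        simp only [RingHom.mapMatrix_apply, Matrix.map_apply, hM]
        rcases eq_or_lt_of_le hk with h | h
        · rw [h, if_pos rfl, hC_diag, map_sub, toZMod_nine_pow, toZMod_nine_pow, sub_self]
        · rw [hC_tri _ _ h, if_neg (by omega : ¬((k : ℕ) + 1 = (i : ℕ)))]
          simp
      rw [Matrix.det_of_upperTriangular htri]
      have hdiag : ∀ i : Fin j, (PadicInt.toZMod.mapMatrix M) i i = 1 := by
        intro i
        show PadicInt.toZMod (M i i) = 1
        simp only [RingHom.mapMatrix_apply, Matrix.map_apply, hM]
        rw [hC_super, if_neg (by omega : ¬((i : ℕ) + 1 = (i : ℕ)))]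
        simp
      simp [hdiag]
    rw [RingHom.map_det, hmap]
    exact one_ne_zero
  set x : Fin j → ℤ_[2] := Matrix.mulVec M⁻¹ (fun i : Fin j => t i) with hx
  have hsol : ∀ i : Fin j, ∑ k, M i k * x k = t i := by
    intro i
    have h1 : (Matrix.mulVec M x) i = t i := by
      rw [hx, Matrix.mulVec_mulVec, Matrix.mul_nonsing_inv M hdet, Matrix.one_mulVec]
    simpa [Matrix.mulVec, dotProduct] using h1
  set w : ℕ → ℤ_[2] := fun m => if h : 1 ≤ m ∧ m ≤ j then x ⟨m - 1, by omega⟩ else 0 with hw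
  have hw0 : w 0 = 0 := by simp [hw]
  have hwval : ∀ m : ℕ, ∀ hm : m < j, w (m + 1) = x ⟨m, hm⟩ := by
    intro m hm
    simp only [hw]
    rw [dif_pos ⟨Nat.le_add_left 1 m, by omega⟩]
    congr 1
  have hwsupp : ∀ i, j < i → w i = 0 := by
    intro i hi
    simp only [hw]
    exact dif_neg (by omega)
  have heq : ∀ i < j, ∑ k ∈ Finset.Icc i j, C i k * w k = 9 ^ j * w i + t i := by
    intro i hi
    have e1 : ∑ k ∈ Finset.Icc i j, C i k * w k = ∑ k ∈ Finset.Icc 0 j, C i k * w k := by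
      apply Finset.sum_subset
      · intro k hk
        simp only [Finset.mem_Icc] at hk ⊢
        omega
      · intro k hk hk'
        simp only [Finset.mem_Icc] at hk hk'
        rw [hC_tri i k (by omega), zero_mul]
    have e2 : ∑ k ∈ Finset.Icc 0 j, C i k * w k = ∑ k ∈ Finset.Icc 1 j, C i k * w k := by
      symm
      apply Finset.sum_subset
      · intro k hk
        simp only [Finset.mem_Icc] at hk ⊢
        omega
      · intro k hk hk'
        simp only [Finset.mem_Icc] at hk hk'
        have hk0 : k = 0 := by omega
        rw [hk0, hw0, mul_zero]
    have hmapIcc : Finset.Icc 1 j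
        = Finset.map ⟨fun m => m + 1, add_left_injective 1⟩ (Finset.range j) := by
      ext k
      simp only [Finset.mem_Icc, Finset.mem_map, Finset.mem_range, Function.Embedding.coeFn_mk]
      constructor
      · rintro ⟨h1, h2⟩; exact ⟨k - 1, by omega, by omega⟩
      · rintro ⟨m, hm, rfl⟩; omega
    have e3 : ∑ k ∈ Finset.Icc 1 j, C i k * w k = ∑ m : Fin j, C i ((m : ℕ) + 1) * x m := by
      calc ∑ k ∈ Finset.Icc 1 j, C i k * w k
          = ∑ m ∈ Finset.range j, C i (m + 1) * w (m + 1) := by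
            rw [hmapIcc, Finset.sum_map]
            apply Finset.sum_congr rfl
            intro m _
            simp
        _ = ∑ m : Fin j, C i ((m : ℕ) + 1) * w ((m : ℕ) + 1) :=
            (Fin.sum_univ_eq_sum_range (fun m => C i (m + 1) * w (m + 1)) j).symm
        _ = ∑ m : Fin j, C i ((m : ℕ) + 1) * x m := by
            apply Finset.sum_congr rfl
            intro m _
            rw [hwval (m : ℕ) m.isLt]
    have e4 : ∑ m : Fin j, C i ((m : ℕ) + 1) * x m
        = (∑ k, M (⟨i, hi⟩ : Fin j) k * x k) + 9 ^ j * w i := by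
      have expand : ∀ k : Fin j, M (⟨i, hi⟩ : Fin j) k * x k
          = C i ((k : ℕ) + 1) * x k - (if (k : ℕ) + 1 = i then (9:ℤ_[2]) ^ j else 0) * x k := by
        intro k
        simp only [hM]
        ring
      rw [Finset.sum_congr rfl fun k _ => expand k, Finset.sum_sub_distrib]
      have hsum2 : ∑ k : Fin j, (if (k : ℕ) + 1 = i then (9 : ℤ_[2]) ^ j else 0) * x k
          = 9 ^ j * w i := by
        rcases Nat.eq_zero_or_pos i with h0 | hpos
        · subst h0
          rw [hw0, mul_zero]
          apply Finset.sum_eq_zero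
          intro k _
          rw [if_neg (by omega), zero_mul]
        · have hi1 : i - 1 < j := by omega
          have hterm : ∀ k : Fin j, (if (k : ℕ) + 1 = i then (9 : ℤ_[2]) ^ j else 0) * x k
              = if k = (⟨i - 1, hi1⟩ : Fin j) then 9 ^ j * x k else 0 := by
            intro k
            by_cases h : (k : ℕ) + 1 = i
            · rw [if_pos h, if_pos (by apply Fin.ext; simp; omega)]
            · rw [if_neg h, if_neg ?_, zero_mul]
              intro hk
              apply h
              rw [hk]
              simp
              omega
          rw [Finset.sum_congr rfl fun k _ => hterm k,
            Finset.sum_ite_eq' Finset.univ (⟨i - 1, hi1⟩ : Fin j), if_pos (Finset.mem_univ _)]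
          have hwi : w i = x ⟨i - 1, hi1⟩ := by
            have h := hwval (i - 1) hi1
            rw [show i - 1 + 1 = i by omega] at h
            exact h
          rw [hwi]
      rw [hsum2]
      ring
    rw [e1, e2, e3, e4, hsol ⟨i, hi⟩]
    ring
  refine ⟨w, hwsupp, ?_, heq⟩
  have hj1 : j - 1 < j := by omega
  have key := heq (j - 1) hj1
  have hIcc : Finset.Icc (j - 1) j = {j - 1, j} := by
    ext k
    simp only [Finset.mem_Icc, Finset.mem_insert, Finset.mem_singleton]
    omega
  rw [hIcc, Finset.sum_insert (by simp; omega), Finset.sum_singleton] at key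
  have hCd : C (j - 1) (j - 1) = 9 ^ (j - 1) := hC_diag _
  have hCs : C (j - 1) j = 1 := by
    have h := hC_super (j - 1)
    rwa [show j - 1 + 1 = j by omega] at h
  rw [hCd, hCs, one_mul] at key
  have hwj : w j = 9 ^ j * w (j - 1) + t (j - 1) - 9 ^ (j - 1) * w (j - 1) := by
    linear_combination key
  rw [isUnit_iff_toZMod, hwj]
  have ht' : PadicInt.toZMod (t (j - 1)) ≠ 0 := (isUnit_iff_toZMod _).mp htu
  rw [map_sub, map_add, map_mul, map_mul, toZMod_nine_pow, toZMod_nine_pow]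
  simpa using ht'

open Classical in
noncomputable def col (C : ℕ → ℕ → ℤ_[2])
    (hC_tri : ∀ i j, j < i → C i j = 0)
    (hC_diag : ∀ i, C i i = 9 ^ i)
    (hC_super : ∀ i, C i (i + 1) = 1) : ℕ → ℕ → ℤ_[2]
  | 0 => fun i => if i = 0 then 1 else 0
  | j + 1 =>
    if h : IsUnit (col C hC_tri hC_diag hC_super j j) then
      Classical.choose (solve_col C hC_tri hC_diag hC_super (j + 1)
        (Nat.succ_le_succ (Nat.zero_le j)) (col C hC_tri hC_diag hC_super j) h)
    else 0

variable (C : ℕ → ℕ → ℤ_[2])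
    (hC_tri : ∀ i j, j < i → C i j = 0)
    (hC_diag : ∀ i, C i i = 9 ^ i)
    (hC_super : ∀ i, C i (i + 1) = 1)

lemma col_good : ∀ j, (∀ i, j < i → col C hC_tri hC_diag hC_super j i = 0) ∧
    IsUnit (col C hC_tri hC_diag hC_super j j) := by
  intro j
  induction j with
  | zero =>
    constructor
    · intro i hi
      simp only [col]
      rw [if_neg (by omega)]
    · simp [col]
  | succ j ih =>
    obtain ⟨h0, hu⟩ := ih
    have hcol : col C hC_tri hC_diag hC_super (j + 1)
        = Classical.choose (solve_col C hC_tri hC_diag hC_super (j + 1)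
          (Nat.succ_le_succ (Nat.zero_le j)) (col C hC_tri hC_diag hC_super j) hu) := by
      simp only [col]
      rw [dif_pos hu]
    have spec := Classical.choose_spec (solve_col C hC_tri hC_diag hC_super (j + 1)
      (Nat.succ_le_succ (Nat.zero_le j)) (col C hC_tri hC_diag hC_super j) hu)
    rw [← hcol] at spec
    exact ⟨spec.1, spec.2.1⟩

lemma col_rel (j : ℕ) : ∀ i < j + 1,
    ∑ k ∈ Finset.Icc i (j + 1), C i k * col C hC_tri hC_diag hC_super (j + 1) k
      = 9 ^ (j + 1) * col C hC_tri hC_diag hC_super (j + 1) i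
        + col C hC_tri hC_diag hC_super j i := by
  have hu := (col_good C hC_tri hC_diag hC_super j).2
  have hcol : col C hC_tri hC_diag hC_super (j + 1)
      = Classical.choose (solve_col C hC_tri hC_diag hC_super (j + 1)
        (Nat.succ_le_succ (Nat.zero_le j)) (col C hC_tri hC_diag hC_super j) hu) := by
    simp only [col]
    rw [dif_pos hu]
  have spec := Classical.choose_spec (solve_col C hC_tri hC_diag hC_super (j + 1)
    (Nat.succ_le_succ (Nat.zero_le j)) (col C hC_tri hC_diag hC_super j) hu)
  rw [← hcol] at spec
  exact spec.2.2

end ConjAux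

theorem conj_to_B (C : ℕ → ℕ → ℤ_[2])
    (hC_tri : ∀ i j, j < i → C i j = 0)
    (hC_diag : ∀ i, C i i = 9 ^ i)
    (hC_super : ∀ i, C i (i + 1) = 1) :
    ∃ U : ℕ → ℕ → ℤ_[2],
      (∀ i j, j < i → U i j = 0) ∧
      (∀ i, IsUnit (U i i)) ∧
      (∀ i j, i ≤ j →
        ∑ k ∈ Finset.Icc i j, U i k * Bmat k j = ∑ k ∈ Finset.Icc i j, C i k * U k j) := by
  classical
  refine ⟨fun i j => ConjAux.col C hC_tri hC_diag hC_super j i, ?_, ?_, ?_⟩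
  · intro i j hji
    exact (ConjAux.col_good C hC_tri hC_diag hC_super j).1 i hji
  · intro i
    exact (ConjAux.col_good C hC_tri hC_diag hC_super i).2
  · intro i j hij
    rcases eq_or_lt_of_le hij with rfl | hlt
    · rw [Finset.Icc_self, Finset.sum_singleton, Finset.sum_singleton]
      have hB : Bmat i i = 9 ^ i := by simp [Bmat]
      rw [hB, hC_diag]
      ring
    · obtain ⟨m, rfl⟩ : ∃ m, j = m + 1 := ⟨j - 1, by omega⟩
      have congr_eq : ∀ k ∈ Finset.Icc i (m + 1),
          ConjAux.col C hC_tri hC_diag hC_super k i * Bmat k (m + 1)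
          = (if k = m + 1 then 9 ^ (m + 1) * ConjAux.col C hC_tri hC_diag hC_super (m + 1) i
              else 0)
            + (if k = m then ConjAux.col C hC_tri hC_diag hC_super m i else 0) := by
        intro k hk
        simp only [Finset.mem_Icc] at hk
        rcases eq_or_lt_of_le hk.2 with rfl | hk2
        · rw [if_pos rfl, if_neg (by omega)]
          have hB : Bmat (m + 1) (m + 1) = 9 ^ (m + 1) := by simp [Bmat]
          rw [hB, add_zero]
          ring
        · rcases eq_or_lt_of_le (by omega : k ≤ m) with rfl | hk3
          · rw [if_neg (by omega), if_pos rfl]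
            have hB : Bmat k (k + 1) = 1 := by
              simp [Bmat]
            rw [hB, mul_one, zero_add]
          · rw [if_neg (by omega), if_neg (by omega)]
            have hB : Bmat k (m + 1) = 0 := by
              simp only [Bmat]
              rw [if_neg (by omega), if_neg (by omega)]
            rw [hB, mul_zero, add_zero]
      have h1 : (m + 1) ∈ Finset.Icc i (m + 1) := by
        simp only [Finset.mem_Icc]; omega
      have h2 : m ∈ Finset.Icc i (m + 1) := by
        simp only [Finset.mem_Icc]; omega
      rw [Finset.sum_congr rfl congr_eq, Finset.sum_add_distrib,
        Finset.sum_ite_eq' (Finset.Icc i (m + 1)), Finset.sum_ite_eq' (Finset.Icc i (m + 1)),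
        if_pos h1, if_pos h2]
      exact (ConjAux.col_rel C hC_tri hC_diag hC_super m i hlt).symm
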